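/- Uniqueness up to scalars of the solution of the Weber equation that decays at −∞: if u and v are two solutions both tending to 0 as x → −∞, then u and v are linearly dependent, i.e. there exist constants c₁, c₂, not both zero, with c₁ u(x) + c₂ v(x) = 0 for all x. -/

import Mathlib

open Filter Set

lemma weber_reg {y : ℝ → ℝ} (hy : ContDiff ℝ 2 y) :
    Differentiable ℝ y ∧ Differentiable ℝ (deriv y) ∧ Continuous (deriv (deriv y)) := by
  have h2 : (2: WithTop ℕ∞) = 1 + 1 := by norm_num
  rw [h2, contDiff_succ_iff_deriv] at hy
  obtain ⟨h1, -, h3⟩ := hy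
  rw [contDiff_one_iff_deriv] at h3
  exact ⟨h1, h3.1, h3.2⟩

/-- same-sign lemma -/
lemma weber_same_sign {y : ℝ → ℝ} (hc : Continuous y) {a x : ℝ} (hx : x ≤ a)
    (hno : ∀ t ≤ a, y t ≠ 0) : 0 < y x * y a := by
  rcases lt_or_ge 0 (y x * y a) with h | h
  · exact h
  exfalso
  have hx0 := hno x hx
  have ha0 := hno a le_rfl
  have hlt : y x * y a < 0 := lt_of_le_of_ne h (by
    intro hh
    rcases mul_eq_zero.mp hh with h1 | h1 <;> [exact hx0 h1; exact ha0 h1])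
  have h0mem : (0:ℝ) ∈ uIcc (y x) (y a) := by
    rcases lt_or_ge (y x) 0 with h1 | h1
    · have h2 : 0 < y a := by nlinarith
      exact mem_uIcc.mpr (Or.inl ⟨le_of_lt h1, le_of_lt h2⟩)
    · have h1' : 0 < y x := lt_of_le_of_ne h1 (fun hh => hx0 hh.symm)
      have h2 : y a < 0 := by nlinarith
      exact mem_uIcc.mpr (Or.inr ⟨le_of_lt h2, le_of_lt h1'⟩)
  obtain ⟨t, ht, hyt⟩ := intermediate_value_uIcc hc.continuousOn h0mem
  rw [uIcc_of_le hx] at ht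
  exact hno t ht.2 hyt


lemma wronskian_const (lam : ℝ) (u v : ℝ → ℝ) (hu : ContDiff ℝ 2 u) (hv : ContDiff ℝ 2 v)
    (hueq : ∀ x, deriv (deriv u) x = (x ^ 2 - lam) * u x)
    (hveq : ∀ x, deriv (deriv v) x = (x ^ 2 - lam) * v x) (x : ℝ) :
    u x * deriv v x - deriv u x * v x = u 0 * deriv v 0 - deriv u 0 * v 0 := by
  obtain ⟨hu1, hu2, -⟩ := weber_reg hu
  obtain ⟨hv1, hv2, -⟩ := weber_reg hv
  set W : ℝ → ℝ := fun x => u x * deriv v x - deriv u x * v x with hW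
  have key : ∀ t, HasDerivAt W 0 t := by
    intro t
    have h1 : HasDerivAt (fun s => u s * deriv v s)
        (deriv u t * deriv v t + u t * deriv (deriv v) t) t :=
      (hu1 t).hasDerivAt.mul (hv2 t).hasDerivAt
    have h2 : HasDerivAt (fun s => deriv u s * v s)
        (deriv (deriv u) t * v t + deriv u t * deriv v t) t :=
      (hu2 t).hasDerivAt.mul (hv1 t).hasDerivAt
    have := h1.sub h2
    refine this.congr_deriv ?_
    rw [hueq, hveq]; ring
  have : ∀ x, deriv W x = 0 := fun x => (key x).deriv
  exact is_const_of_deriv_eq_zero (fun x => (key x).differentiableAt) this x 0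

/-- `y^2` is nondecreasing on `Iic a` if `y'' = Q y` with `Q ≥ 0` there and `y → 0` at `-∞`. -/
lemma sq_mono (Q y : ℝ → ℝ) (hy : ContDiff ℝ 2 y)
    (hyeq : ∀ x, deriv (deriv y) x = Q x * y x) (a : ℝ)
    (hQ : ∀ x ≤ a, 0 ≤ Q x) (hlim : Tendsto y atBot (nhds 0)) :
    ∀ x w, x ≤ w → w ≤ a → y x ^ 2 ≤ y w ^ 2 := by
  obtain ⟨hy1, hy2, -⟩ := weber_reg hy
  set z : ℝ → ℝ := fun x => y x ^ 2 with hzdef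
  have hdz : ∀ t, HasDerivAt z (2 * y t * deriv y t) t := by
    intro t
    have := ((hy1 t).hasDerivAt).pow 2
    exact this.congr_deriv (by push_cast; ring)
  have hderivz : deriv z = fun t => 2 * y t * deriv y t := funext fun t => (hdz t).deriv
  have hddz : ∀ t, HasDerivAt (deriv z)
      (2 * deriv y t * deriv y t + 2 * y t * (Q t * y t)) t := by
    intro t
    rw [hderivz]
    have h1 : HasDerivAt (fun s => 2 * y s) (2 * deriv y t) t :=
      ((hy1 t).hasDerivAt).const_mul 2
    have h2 := h1.mul ((hy2 t).hasDerivAt)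
    rw [hyeq t] at h2
    exact h2

  have hconv : ConvexOn ℝ (Iic a) z := by
    apply convexOn_of_deriv2_nonneg' (convex_Iic a)
    · exact fun t _ => ((hdz t).differentiableAt).differentiableWithinAt
    · exact fun t _ => ((hddz t).differentiableAt).differentiableWithinAt
    · intro t ht
      have : deriv^[2] z t = deriv (deriv z) t := rfl
      rw [this, (hddz t).deriv]
      have := hQ t ht
      nlinarith [sq_nonneg (deriv y t), sq_nonneg (y t)]
  intro x w hxw hwa
  rcases eq_or_lt_of_le hxw with rfl | hxw
  · exact le_refl _
  -- convexity inequality for s < x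
  have hle : ∀ s < x, z x ≤ (w - x)/(w - s) * z s + (x - s)/(w - s) * z w := by
    intro s hs
    have hsw : s < w := hs.trans hxw
    have hws : (0:ℝ) < w - s := by linarith
    have ht1 : (0:ℝ) ≤ (w - x)/(w - s) := by
      apply div_nonneg <;> linarith
    have ht2 : (0:ℝ) ≤ (x - s)/(w - s) := by
      apply div_nonneg <;> linarith
    have hsum : (w - x)/(w - s) + (x - s)/(w - s) = 1 := by
      field_simp; ring
    have hcomb : (w - x)/(w - s) * s + (x - s)/(w - s) * w = x := by
      field_simp; ring
    have hmem1 : s ∈ Iic a := le_of_lt (lt_of_lt_of_le hsw hwa)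
    have hmem2 : w ∈ Iic a := hwa
    have := hconv.2 hmem1 hmem2 ht1 ht2 hsum
    simpa [smul_eq_mul, hcomb] using this
  -- take the limit s → -∞
  have hws' : Tendsto (fun s => w - s) atBot atTop := tendsto_atTop_add_const_left _ w tendsto_neg_atBot_atTop
  have hinv : Tendsto (fun s => (w - s)⁻¹) atBot (nhds 0) := hws'.inv_tendsto_atTop
  have hz0 : Tendsto (fun s => z s) atBot (nhds 0) := by
    have := hlim.mul hlim
    rw [mul_zero] at this
    apply this.congr
    intro s; simp [hzdef, sq]
  have hT1 : Tendsto (fun s => (w - x)/(w - s) * z s) atBot (nhds 0) := by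
    have h1 : Tendsto (fun s => (w - x)/(w - s)) atBot (nhds 0) := by
      have := hinv.const_mul (w - x)
      rw [mul_zero] at this
      apply this.congr
      intro s; rw [div_eq_mul_inv]
    have := h1.mul hz0
    rwa [mul_zero] at this
  have hT2 : Tendsto (fun s => (x - s)/(w - s) * z w) atBot (nhds (z w)) := by
    have h1 : Tendsto (fun s => (x - s)/(w - s)) atBot (nhds 1) := by
      have h2 : Tendsto (fun s => 1 + (x - w) * (w - s)⁻¹) atBot (nhds 1) := by
        have := hinv.const_mul (x - w)
        rw [mul_zero] at this
        have := (tendsto_const_nhds (x := (1:ℝ)) (f := atBot)).add this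
        rwa [add_zero] at this
      apply h2.congr'
      filter_upwards [eventually_lt_atBot w] with s hs
      have hne : w - s ≠ 0 := sub_ne_zero.mpr (ne_of_gt hs)
      field_simp; ring
    have := h1.mul (tendsto_const_nhds (x := z w) (f := atBot))
    rwa [one_mul] at this
  have hT : Tendsto (fun s => (w - x)/(w - s) * z s + (x - s)/(w - s) * z w) atBot (nhds (z w)) := by
    have := hT1.add hT2
    rwa [zero_add] at this
  have : z x ≤ z w := by
    apply ge_of_tendsto hT
    filter_upwards [eventually_lt_atBot x] with s hs
    exact hle s hs
  simpa [hzdef] using this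
/-- If `U, V > 0` on `Iic a`, `U ≤ U a` there, and the Wronskian `U V' - U' V = c`,
then `c` is not positive. -/
lemma wronskian_not_pos (U V : ℝ → ℝ) (hU1 : Differentiable ℝ U) (hV1 : Differentiable ℝ V)
    (a c : ℝ) (hW : ∀ x, U x * deriv V x - deriv U x * V x = c)
    (hUpos : ∀ x ≤ a, 0 < U x) (hVpos : ∀ x ≤ a, 0 < V x)
    (hUmono : ∀ x ≤ a, U x ≤ U a) : ¬ (0 < c) := by
  intro hc
  set R : ℝ → ℝ := fun x => V x / U x with hR
  have hUa := hUpos a le_rfl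
  have hmpos : 0 < c / U a ^ 2 := by positivity
  have hRd : ∀ ξ ≤ a, HasDerivAt R (c / U ξ ^ 2) ξ := by
    intro ξ hξ
    have hUξ := hUpos ξ hξ
    have h := (hV1 ξ).hasDerivAt.div (hU1 ξ).hasDerivAt (ne_of_gt hUξ)
    have hnum : deriv V ξ * U ξ - V ξ * deriv U ξ = c := by
      have := hW ξ; linarith
    rwa [hnum] at h
  have hRa : 0 < R a := div_pos (hVpos a le_rfl) hUa
  have hxa : a - (R a / (c / U a ^ 2) + 1) < a := by
    have : 0 < R a / (c / U a ^ 2) + 1 := by positivity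
    linarith
  obtain ⟨ξ, hξmem, hξeq⟩ := exists_hasDerivAt_eq_slope R (fun ξ => c / U ξ ^ 2) hxa
    (ContinuousOn.div hV1.continuous.continuousOn hU1.continuous.continuousOn
      (fun t ht => ne_of_gt (hUpos t ht.2)))
    (fun ξ hξ => hRd ξ (le_of_lt hξ.2))
  set x : ℝ := a - (R a / (c / U a ^ 2) + 1)
  have hξa : ξ ≤ a := le_of_lt hξmem.2
  have hUξ := hUpos ξ hξa
  have hUξa := hUmono ξ hξa
  -- slope bound
  have hslope : c / U a ^ 2 ≤ c / U ξ ^ 2 := by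
    apply div_le_div_of_nonneg_left (le_of_lt hc) (by positivity)
    nlinarith
  have hax : a - x = R a / (c / U a ^ 2) + 1 := by ring
  have hRx : 0 < R x := div_pos (hVpos x (le_of_lt hxa)) (hUpos x (le_of_lt hxa))
  -- from MVT: R a - R x = (c / U ξ^2) * (a - x) ≥ (c/Ua^2)*(a-x) = R a + c/Ua^2
  have h1 : R a - R x = (c / U ξ ^ 2) * (a - x) := by
    rw [hξeq]
    rw [div_mul_eq_mul_div, mul_div_assoc, div_self (by linarith : a - x ≠ 0), mul_one]
  have h2 : (c / U a ^ 2) * (a - x) = R a + c / U a ^ 2 := by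
    rw [hax]; field_simp
  nlinarith [mul_le_mul_of_nonneg_right hslope (by linarith [hxa] : (0:ℝ) ≤ a - x)]

/-- A solution of `y'' = Q y` with `y x₀ = y' x₀ = 0` vanishes identically. -/
lemma ode_zero (Q y : ℝ → ℝ) (hQ : Continuous Q) (hy : ContDiff ℝ 2 y)
    (hyeq : ∀ x, deriv (deriv y) x = Q x * y x) (x₀ : ℝ)
    (h0 : y x₀ = 0) (h0' : deriv y x₀ = 0) : ∀ x, y x = 0 := by
  obtain ⟨hy1, hy2, -⟩ := weber_reg hy
  intro x
  set a : ℝ := min x x₀ - 1 with ha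
  set b : ℝ := max x x₀ + 1 with hb
  have hab : a < b := by
    have h1 : min x x₀ ≤ max x x₀ := le_trans (min_le_left _ _) (le_max_left _ _)
    simp only [ha, hb]; linarith
  have hx0mem : x₀ ∈ Ioo a b := by
    constructor
    · simp only [ha]; linarith [min_le_right x x₀]
    · simp only [hb]; linarith [le_max_right x x₀]
  have hxmem : x ∈ Icc a b := by
    constructor
    · simp only [ha]; linarith [min_le_left x x₀]
    · simp only [hb]; linarith [le_max_left x x₀]
  obtain ⟨C, hC⟩ := (isCompact_Icc (a := a) (b := b)).exists_bound_of_continuousOn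
    hQ.continuousOn
  have hC0 : 0 ≤ C := le_trans (norm_nonneg _) (hC a ⟨le_rfl, le_of_lt hab⟩)
  set K : NNReal := (max 1 C).toNNReal with hK
  have hKcoe : (K : ℝ) = max 1 C := Real.coe_toNNReal _ (le_trans zero_le_one (le_max_left _ _))
  -- clamped vector field
  set Qc : ℝ → ℝ := fun t => Q (min b (max a t)) with hQc
  set w : ℝ → ℝ × ℝ → ℝ × ℝ := fun t p => (p.2, Qc t * p.1) with hw
  have hQcbound : ∀ t, |Qc t| ≤ C := by
    intro t
    have hmem : min b (max a t) ∈ Icc a b := by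
      constructor
      · exact le_min (le_of_lt hab) (le_max_left _ _)
      · exact min_le_left _ _
    simpa [Real.norm_eq_abs] using hC _ hmem
  have hlip : ∀ t, LipschitzOnWith K (w t) univ := by
    intro t
    apply LipschitzWith.lipschitzOnWith
    apply LipschitzWith.of_dist_le_mul
    intro p q
    rw [Prod.dist_eq, Prod.dist_eq]
    simp only [hw, Real.dist_eq, hKcoe]
    apply max_le
    · calc |p.2 - q.2| ≤ max |p.1 - q.1| |p.2 - q.2| := le_max_right _ _
        _ ≤ max 1 C * max |p.1 - q.1| |p.2 - q.2| := by
            nlinarith [le_max_left (1:ℝ) C, abs_nonneg (p.1 - q.1), abs_nonneg (p.2-q.2),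
              le_max_left |p.1 - q.1| |p.2 - q.2|, le_max_right |p.1 - q.1| |p.2 - q.2|]
    · have : |Qc t * p.1 - Qc t * q.1| = |Qc t| * |p.1 - q.1| := by
        rw [← abs_mul]; ring_nf
      rw [this]
      calc |Qc t| * |p.1 - q.1| ≤ C * |p.1 - q.1| :=
            mul_le_mul_of_nonneg_right (hQcbound t) (abs_nonneg _)
        _ ≤ max 1 C * max |p.1 - q.1| |p.2 - q.2| := by
            apply mul_le_mul (le_max_right _ _) (le_max_left _ _) (abs_nonneg _)
            exact le_trans zero_le_one (le_max_left _ _)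
  set f : ℝ → ℝ × ℝ := fun t => (y t, deriv y t) with hf
  set g : ℝ → ℝ × ℝ := fun _ => ((0:ℝ), (0:ℝ)) with hg
  have hfd : ∀ t ∈ Ioo a b, HasDerivAt f (w t (f t)) t := by
    intro t ht
    have hproj : min b (max a t) = t := by
      rw [max_eq_right (le_of_lt ht.1), min_eq_right (le_of_lt ht.2)]
    have h1 : HasDerivAt y (deriv y t) t := (hy1 t).hasDerivAt
    have h2 : HasDerivAt (deriv y) (Qc t * y t) t := by
      have := (hy2 t).hasDerivAt
      rwa [hyeq t, show Q t = Qc t by rw [hQc]; simp [hproj]] at this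
    exact h1.prodMk h2
  have hgd : ∀ t ∈ Ioo a b, HasDerivAt g (w t (g t)) t := by
    intro t ht
    have : w t (g t) = (0, 0) := by simp [hw, hg]
    rw [this]
    exact hasDerivAt_const t _
  have heq : f x₀ = g x₀ := by simp [hf, hg, h0, h0']
  have := ODE_solution_unique_of_mem_Icc (s := fun _ => univ) (fun t _ => hlip t) hx0mem
    (Continuous.continuousOn (hy1.continuous.prodMk hy2.continuous))
    hfd (fun _ _ => mem_univ _)
    continuousOn_const hgd (fun _ _ => mem_univ _) heq
  have hx := this hxmem
  have : y x = (0:ℝ) := congrArg Prod.fst hx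
  exact this

/-- Uniqueness, up to scalars, of the solution of the Weber equation decaying
at `-∞`. -/
theorem weber_decaying_solution_unique
    (lam : ℝ)
    (u v : ℝ → ℝ) (hu : ContDiff ℝ 2 u) (hv : ContDiff ℝ 2 v)
    (hueq : ∀ x, deriv (deriv u) x = (x ^ 2 - lam) * u x)
    (hveq : ∀ x, deriv (deriv v) x = (x ^ 2 - lam) * v x)
    (hulim : Tendsto u atBot (nhds 0))
    (hvlim : Tendsto v atBot (nhds 0)) :
    ∃ c₁ c₂ : ℝ, (c₁ ≠ 0 ∨ c₂ ≠ 0) ∧ ∀ x, c₁ * u x + c₂ * v x = 0 := by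
  obtain ⟨hu1, hu2, -⟩ := weber_reg hu
  obtain ⟨hv1, hv2, -⟩ := weber_reg hv
  set Q : ℝ → ℝ := fun x => x ^ 2 - lam with hQ
  have hQcont : Continuous Q := by fun_prop
  set a : ℝ := -(|lam| + 1) with ha
  have hQpos : ∀ x ≤ a, 0 ≤ Q x := by
    intro x hx
    simp only [hQ, ha] at *
    nlinarith [sq_nonneg (x + |lam| + 1), abs_nonneg lam, le_abs_self lam]
  have humono := sq_mono Q u hu hueq a hQpos hulim
  have hvmono := sq_mono Q v hv hveq a hQpos hvlim
  have hWc := wronskian_const lam u v hu hv hueq hveq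
  set c : ℝ := u 0 * deriv v 0 - deriv u 0 * v 0 with hc
  -- vanishing-on-a-ray helper
  have hray : ∀ (y : ℝ → ℝ), ContDiff ℝ 2 y → (∀ x, deriv (deriv y) x = Q x * y x) →
      Tendsto y atBot (nhds 0) → ∀ x₀ ≤ a, y x₀ = 0 → y x₀ = 0 ∧ deriv y x₀ = 0 := by
    intro y hy hyeq hylim x₀ hx₀ hy0
    refine ⟨hy0, ?_⟩
    have hzero : ∀ t ≤ x₀, y t = 0 := by
      intro t ht
      have := sq_mono Q y hy hyeq a hQpos hylim t x₀ ht hx₀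
      rw [hy0] at this
      nlinarith [sq_nonneg (y t)]
    have h1 : HasDerivWithinAt y 0 (Iic x₀) x₀ :=
      (hasDerivWithinAt_const x₀ (Iic x₀) 0).congr (fun t ht => hzero t ht) (hzero x₀ le_rfl)
    have h2 : HasDerivWithinAt y (deriv y x₀) (Iic x₀) x₀ :=
      ((weber_reg hy).1 x₀).hasDerivAt.hasDerivWithinAt
    have huniq := uniqueDiffOn_Iic x₀ x₀ self_mem_Iic
    rw [← h1.derivWithin huniq, ← h2.derivWithin huniq]
  -- the Wronskian vanishes
  have hczero : c = 0 := by
    by_cases hz : ∃ x₀ ≤ a, u x₀ = 0 ∨ v x₀ = 0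
    · obtain ⟨x₀, hx₀, h | h⟩ := hz
      · obtain ⟨h1, h2⟩ := hray u hu hueq hulim x₀ hx₀ h
        have := hWc x₀
        rw [h1, h2] at this
        simp at this
        linarith [this]
      · obtain ⟨h1, h2⟩ := hray v hv hveq hvlim x₀ hx₀ h
        have := hWc x₀
        rw [h1, h2] at this
        simp at this
        linarith [this]
    · push_neg at hz
      set su : ℝ := if 0 < u a then 1 else -1 with hsu
      set sv : ℝ := if 0 < v a then 1 else -1 with hsv
      have hsu2 : su * su = 1 := by rcases ite_eq_or_eq (0 < u a) (1:ℝ) (-1) with h | h <;>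
        rw [hsu, h] <;> norm_num
      have hsv2 : sv * sv = 1 := by rcases ite_eq_or_eq (0 < v a) (1:ℝ) (-1) with h | h <;>
        rw [hsv, h] <;> norm_num
      have hUpos : ∀ x ≤ a, 0 < su * u x := by
        intro x hx
        have hss := weber_same_sign hu1.continuous hx (fun t ht => (hz t ht).1)
        rcases lt_or_ge 0 (u a) with h | h
        · rw [hsu, if_pos h]; nlinarith
        · rw [hsu, if_neg (not_lt.mpr h)]
          have : u a < 0 := lt_of_le_of_ne h (hz a le_rfl).1
          nlinarith
      have hVpos : ∀ x ≤ a, 0 < sv * v x := by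
        intro x hx
        have hss := weber_same_sign hv1.continuous hx (fun t ht => (hz t ht).2)
        rcases lt_or_ge 0 (v a) with h | h
        · rw [hsv, if_pos h]; nlinarith
        · rw [hsv, if_neg (not_lt.mpr h)]
          have : v a < 0 := lt_of_le_of_ne h (hz a le_rfl).2
          nlinarith
      set U : ℝ → ℝ := fun t => su * u t with hU
      set V : ℝ → ℝ := fun t => sv * v t with hV
      have hUd : Differentiable ℝ U := hu1.const_mul su
      have hVd : Differentiable ℝ V := hv1.const_mul sv
      have hUderiv : ∀ t, deriv U t = su * deriv u t := by
        intro t; rw [hU, deriv_const_mul _ (hu1 t)]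
      have hVderiv : ∀ t, deriv V t = sv * deriv v t := by
        intro t; rw [hV, deriv_const_mul _ (hv1 t)]
      have hWUV : ∀ x, U x * deriv V x - deriv U x * V x = su * sv * c := by
        intro x
        rw [hUderiv, hVderiv]
        have := hWc x
        show su * u x * (sv * deriv v x) - su * deriv u x * (sv * v x) = su * sv * c
        linear_combination (su * sv) * this
      have hWVU : ∀ x, V x * deriv U x - deriv V x * U x = -(su * sv * c) := by
        intro x
        have := hWUV x
        linarith
      have hUmono : ∀ x ≤ a, U x ≤ U a := by
        intro x hx
        have h1 := humono x a hx le_rfl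
        have h2 : U x ^ 2 ≤ U a ^ 2 := by
          simp only [hU]; nlinarith
        have hpx : 0 < U x := hUpos x hx
        have hpa : 0 < U a := hUpos a le_rfl
        nlinarith [hpx, hpa, h2]
      have hVmono : ∀ x ≤ a, V x ≤ V a := by
        intro x hx
        have h1 := hvmono x a hx le_rfl
        have h2 : V x ^ 2 ≤ V a ^ 2 := by
          simp only [hV]; nlinarith
        have hpx : 0 < V x := hVpos x hx
        have hpa : 0 < V a := hVpos a le_rfl
        nlinarith [hpx, hpa, h2]
      have h1 := wronskian_not_pos U V hUd hVd a (su * sv * c) hWUV hUpos hVpos hUmono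
      have h2 := wronskian_not_pos V U hVd hUd a (-(su * sv * c)) hWVU hVpos hUpos hVmono
      have h3 : su * sv * c = 0 := by
        rcases lt_trichotomy (su * sv * c) 0 with h | h | h
        · exact absurd (by linarith) h2
        · exact h
        · exact absurd h h1
      linear_combination (su * sv) * h3 - c * (sv * sv) * hsu2 - c * hsv2
  -- conclude
  by_cases hu0 : ∀ x, u x = 0
  · exact ⟨1, 0, Or.inl one_ne_zero, fun x => by simp [hu0 x]⟩
  · push_neg at hu0
    obtain ⟨x₀, hx₀⟩ := hu0
    set k : ℝ := v x₀ / u x₀ with hk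
    set y : ℝ → ℝ := fun x => k * u x - v x with hy
    have hycd : ContDiff ℝ 2 y := (contDiff_const.mul hu).sub hv
    have hyderiv : ∀ t, deriv y t = k * deriv u t - deriv v t := by
      intro t
      have h := (((hu1 t).hasDerivAt.const_mul k).sub (hv1 t).hasDerivAt)
      exact h.deriv
    have hyeq : ∀ x, deriv (deriv y) x = Q x * y x := by
      intro x
      have h1 : deriv y = fun t => k * deriv u t - deriv v t := funext hyderiv
      rw [h1]
      have h : HasDerivAt (fun t => k * deriv u t - deriv v t) _ x := (((hu2 x).hasDerivAt.const_mul k).sub (hv2 x).hasDerivAt)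
      rw [h.deriv, hueq x, hveq x]
      simp only [hy, hQ]
      ring
    have hy0 : y x₀ = 0 := by
      simp only [hy, hk]
      field_simp; ring
    have hy0' : deriv y x₀ = 0 := by
      rw [hyderiv]
      have hW := hWc x₀
      rw [hczero] at hW
      rw [hk]
      field_simp
      nlinarith [hW]
    have hall := ode_zero Q y hQcont hycd hyeq x₀ hy0 hy0'
    refine ⟨k, -1, Or.inr (by norm_num), fun x => ?_⟩
    have := hall x
    simp only [hy] at this
    linarith
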